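/- Let d ≥ 1, q ≥ 2, m ≥ 1, and let h : V → [m^{-1}, ∞) on a finite set V ⊂ m^{-1}Z^d. Suppose V = V_1 ∪ … ∪ V_M is a partition and x_1, …, x_M ∈ V satisfy: for all ℓ and x ∈ V_ℓ, h(x) ≥ max(h(x_ℓ), ‖x − x_ℓ‖_∞), and dq/2 − d ≥ 1. Then m^{-d} Σ_{x∈V} h(x)^{−dq/2} ≤ C(d, q) Σ_{ℓ=1}^M h(x_ℓ)^{d − dq/2}, with C(d, q) depending only on d and q. -/

import Mathlib

open Finset

private lemma tail_sum (r : ℝ) (hr : 1 < r) (N : ℕ) (hN : 1 ≤ N) (S : Finset ℕ)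
    (hS : ∀ k ∈ S, N + 1 ≤ k) :
    ∑ k ∈ S, (k : ℝ) ^ (-r) ≤ (N : ℝ) ^ (1 - r) / (r - 1) := by
  have hN0 : (0:ℝ) < N := by exact_mod_cast hN
  have hr0 : (0:ℝ) < r - 1 := by linarith
  rw [show (1:ℝ) - r = -r + 1 by ring]
  have key : ∀ n : ℕ, ∑ i ∈ Finset.range n, ((N : ℝ) + ((i + 1 : ℕ) : ℝ)) ^ (-r)
      ≤ (N : ℝ) ^ (-r + 1) / (r - 1) := by
    intro n
    have hanti : AntitoneOn (fun x : ℝ => x ^ (-r)) (Set.Icc (N:ℝ) ((N:ℝ) + n)) := by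
      intro x hx y hy hxy
      exact Real.rpow_le_rpow_of_nonpos (lt_of_lt_of_le hN0 hx.1) hxy (by linarith)
    have h1 := hanti.sum_le_integral
    have h2 : ∫ x in (N:ℝ)..((N:ℝ) + n), x ^ (-r)
        = (((N:ℝ) + n) ^ (-r + 1) - (N:ℝ) ^ (-r + 1)) / (-r + 1) := by
      apply integral_rpow
      right
      refine ⟨fun hc => by linarith, ?_⟩
      rw [Set.uIcc_of_le (le_add_of_nonneg_right (Nat.cast_nonneg n))]
      intro hc
      exact absurd hc.1 (by push_neg; exact hN0)
    rw [h2] at h1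
    refine h1.trans ?_
    rw [show (-r+1:ℝ) = -(r-1) by ring, div_neg, ← neg_div, neg_sub]
    rw [div_le_div_iff₀ hr0 hr0]
    have h3 : (0:ℝ) ≤ ((N:ℝ) + n) ^ (-(r-1)) := Real.rpow_nonneg (by positivity) _
    nlinarith [Real.rpow_nonneg hN0.le (-(r-1))]
  set K := S.sup id with hK
  calc ∑ k ∈ S, (k : ℝ) ^ (-r)
      ≤ ∑ k ∈ Finset.Ico (N+1) (K+1), (k : ℝ) ^ (-r) := by
        apply Finset.sum_le_sum_of_subset_of_nonneg
        · intro k hk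
          rw [Finset.mem_Ico]
          exact ⟨hS k hk, Nat.lt_succ_of_le (Finset.le_sup (f := id) hk)⟩
        · intro k _ _; exact Real.rpow_nonneg (Nat.cast_nonneg k) _
    _ ≤ (N : ℝ) ^ (-r + 1) / (r - 1) := by
        rw [Finset.sum_Ico_eq_sum_range]
        refine le_trans (le_of_eq (Finset.sum_congr rfl fun i _ => ?_)) (key (K+1-(N+1)))
        congr 1
        push_cast
        ring

open Finset

private lemma oneD (r a mR : ℝ) (hr : 1 < r) (hm : 1 ≤ mR) (ha : 1/mR ≤ a)
    (T : Finset ℤ) :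
    ∑ n ∈ T, (max a (|(n:ℝ)|/mR)) ^ (-r)
      ≤ (5 + 2/(r-1)) * mR * a^(1-r) := by
  have hm0 : (0:ℝ) < mR := by linarith
  have ha0 : (0:ℝ) < a := lt_of_lt_of_le (by positivity) ha
  have hamR : (1:ℝ) ≤ a * mR := by
    rw [div_le_iff₀ hm0] at ha; linarith
  have hamR0 : (0:ℝ) < a * mR := by linarith
  set N := ⌈a * mR⌉₊ with hNdef
  have hN1 : 1 ≤ N := Nat.one_le_iff_ne_zero.mpr (by
    intro hc
    have := Nat.ceil_eq_zero.mp hc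
    linarith)
  have hNge : a * mR ≤ (N:ℝ) := Nat.le_ceil _
  have hNle : (N:ℝ) ≤ 2 * (a * mR) := by
    have := Nat.ceil_lt_add_one hamR0.le
    linarith
  rw [← Finset.sum_filter_add_sum_filter_not T (fun n => n.natAbs ≤ N)]
  have hb1 : ∑ n ∈ T.filter (fun n => n.natAbs ≤ N), (max a (|(n:ℝ)|/mR)) ^ (-r)
      ≤ 5 * mR * a^(1-r) := by
    calc ∑ n ∈ T.filter (fun n => n.natAbs ≤ N), (max a (|(n:ℝ)|/mR)) ^ (-r)
        ≤ ∑ _n ∈ T.filter (fun n => n.natAbs ≤ N), a ^ (-r) := by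
          apply Finset.sum_le_sum
          intro n _
          exact Real.rpow_le_rpow_of_nonpos ha0 (le_max_left _ _) (by linarith)
      _ = (T.filter (fun n => n.natAbs ≤ N)).card * a ^ (-r) := by
          rw [Finset.sum_const, nsmul_eq_mul]
      _ ≤ (5 * (a * mR)) * a ^ (-r) := by
          apply mul_le_mul_of_nonneg_right _ (Real.rpow_nonneg ha0.le _)
          have hsub : T.filter (fun n => n.natAbs ≤ N) ⊆ Finset.Icc (-(N:ℤ)) (N:ℤ) := by
            intro n hn
            rw [Finset.mem_filter] at hn
            rw [Finset.mem_Icc]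
            omega
          have hcard : (T.filter (fun n => n.natAbs ≤ N)).card ≤ 2 * N + 1 := by
            refine le_trans (Finset.card_le_card hsub) ?_
            rw [Int.card_Icc]
            omega
          calc ((T.filter (fun n => n.natAbs ≤ N)).card : ℝ) ≤ (2 * N + 1 : ℕ) := by
                exact_mod_cast hcard
            _ ≤ 5 * (a * mR) := by push_cast; nlinarith
      _ = 5 * mR * a^(1-r) := by
          rw [show (1:ℝ) - r = 1 + (-r) by ring, Real.rpow_add ha0, Real.rpow_one]
          ring
  have hb2 : ∑ n ∈ T.filter (fun n => ¬ n.natAbs ≤ N), (max a (|(n:ℝ)|/mR)) ^ (-r)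
      ≤ (2/(r-1)) * mR * a^(1-r) := by
    set T₂ := T.filter (fun n => ¬ n.natAbs ≤ N) with hT2
    have habs : ∀ n : ℤ, |(n:ℝ)| = ((n.natAbs : ℕ) : ℝ) := by
      intro n
      rw [Nat.cast_natAbs]
      exact Int.cast_abs.symm
    have hstep : ∀ n ∈ T₂, (max a (|(n:ℝ)|/mR)) ^ (-r)
        ≤ mR ^ r * ((n.natAbs : ℝ)) ^ (-r) := by
      intro n hn
      rw [Finset.mem_filter] at hn
      have hna : N + 1 ≤ n.natAbs := by omega
      have hna0 : (0:ℝ) < (n.natAbs:ℝ) := by exact_mod_cast (by omega : 0 < n.natAbs)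
      have hpos : (0:ℝ) < |(n:ℝ)|/mR := by
        rw [habs]
        exact div_pos hna0 hm0
      have h1 : (max a (|(n:ℝ)|/mR)) ^ (-r) ≤ (|(n:ℝ)|/mR) ^ (-r) :=
        Real.rpow_le_rpow_of_nonpos hpos (le_max_right _ _) (by linarith)
      refine h1.trans (le_of_eq ?_)
      rw [Real.div_rpow (abs_nonneg _) hm0.le, habs]
      rw [Real.rpow_neg hm0.le]
      field_simp
    calc ∑ n ∈ T₂, (max a (|(n:ℝ)|/mR)) ^ (-r)
        ≤ ∑ n ∈ T₂, mR ^ r * ((n.natAbs : ℝ)) ^ (-r) := Finset.sum_le_sum hstep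
      _ = mR ^ r * ∑ n ∈ T₂, ((n.natAbs : ℝ)) ^ (-r) := by rw [Finset.mul_sum]
      _ ≤ mR ^ r * (2 * ((N:ℝ) ^ (1-r) / (r-1))) := by
          apply mul_le_mul_of_nonneg_left _ (Real.rpow_nonneg hm0.le _)
          have hcomp : ∑ n ∈ T₂, ((n.natAbs : ℝ)) ^ (-r)
              = ∑ k ∈ T₂.image Int.natAbs,
                  (T₂.filter (fun n => n.natAbs = k)).card • ((k:ℝ)) ^ (-r) :=
            Finset.sum_comp (fun k : ℕ => ((k:ℝ)) ^ (-r)) Int.natAbs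
          rw [hcomp]
          have hstep2 : ∑ k ∈ T₂.image Int.natAbs,
                (T₂.filter (fun n => n.natAbs = k)).card • ((k:ℝ)) ^ (-r)
              ≤ ∑ k ∈ T₂.image Int.natAbs, 2 * ((k:ℝ)) ^ (-r) := by
            apply Finset.sum_le_sum
            intro k _
            rw [nsmul_eq_mul]
            apply mul_le_mul_of_nonneg_right _ (Real.rpow_nonneg (Nat.cast_nonneg k) _)
            have hsub : T₂.filter (fun n => n.natAbs = k) ⊆ ({(k:ℤ), -(k:ℤ)} : Finset ℤ) := by
              intro n hn
              rw [Finset.mem_filter] at hn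
              simp only [Finset.mem_insert, Finset.mem_singleton]
              omega
            have hc1 := Finset.card_le_card hsub
            have h2 : (({(k:ℤ), -(k:ℤ)} : Finset ℤ)).card ≤ 2 :=
              le_trans (Finset.card_insert_le _ _) (by simp)
            exact_mod_cast le_trans hc1 h2
          refine hstep2.trans ?_
          rw [← Finset.mul_sum]
          apply mul_le_mul_of_nonneg_left _ (by norm_num)
          apply tail_sum r hr N hN1
          intro k hk
          rw [Finset.mem_image] at hk
          obtain ⟨n, hn, rfl⟩ := hk
          rw [hT2, Finset.mem_filter] at hn
          omega
      _ ≤ (2/(r-1)) * mR * a^(1-r) := by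
          have h1 : (N:ℝ) ^ (1-r) ≤ (a*mR) ^ (1-r) :=
            Real.rpow_le_rpow_of_nonpos hamR0 hNge (by linarith)
          have h2 : (a*mR) ^ ((1:ℝ)-r) = a^((1:ℝ)-r) * mR^((1:ℝ)-r) := Real.mul_rpow ha0.le hm0.le
          have h3 : mR ^ r * mR ^ ((1:ℝ)-r) = mR := by
            rw [← Real.rpow_add hm0]
            norm_num
          have hrpos : (0:ℝ) < r - 1 := by linarith
          calc mR ^ r * (2 * ((N:ℝ) ^ (1-r) / (r-1)))
              ≤ mR ^ r * (2 * ((a*mR) ^ ((1:ℝ)-r) / (r-1))) := by gcongr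
            _ = (2/(r-1)) * (mR ^ r * mR ^ ((1:ℝ)-r)) * a^((1:ℝ)-r) := by rw [h2]; ring
            _ = (2/(r-1)) * mR * a^(1-r) := by rw [h3]
  calc ∑ n ∈ T.filter (fun n => n.natAbs ≤ N), (max a (|(n:ℝ)|/mR)) ^ (-r)
        + ∑ n ∈ T.filter (fun n => ¬ n.natAbs ≤ N), (max a (|(n:ℝ)|/mR)) ^ (-r)
      ≤ 5 * mR * a^(1-r) + (2/(r-1)) * mR * a^(1-r) := add_le_add hb1 hb2
    _ = (5 + 2/(r-1)) * mR * a^(1-r) := by ring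

/-- Key summation step: if `V ⊆ m⁻¹ℤ^d` is partitioned into groups `V_ℓ` with
representatives `x_ℓ` such that `h(x) ≥ max(h(x_ℓ), ‖x - x_ℓ‖_∞)` on `V_ℓ`,
`h ≥ m⁻¹` and `dq/2 - d ≥ 1`, then
`m^{-d} Σ_{x∈V} h(x)^{-dq/2} ≤ C(d,q) Σ_ℓ h(x_ℓ)^{d-dq/2}`. -/
theorem stmt_17 (d : ℕ) (q : ℝ) (hd : 1 ≤ d) (hq : 2 ≤ q)
    (hqd : 1 ≤ (d : ℝ) * q / 2 - d) :
    ∃ C : ℝ, 0 < C ∧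
      ∀ (m M : ℕ) (V : Finset (Fin d → ℤ)) (Vl : Fin M → Finset (Fin d → ℤ))
        (x : Fin M → (Fin d → ℤ)) (h : (Fin d → ℤ) → ℝ),
        1 ≤ m →
        (∀ τ ∈ V, (1 : ℝ) / m ≤ h τ) →
        (∀ ℓ, x ℓ ∈ V) →
        V = Finset.univ.biUnion Vl →
        (Pairwise fun ℓ ℓ' => Disjoint (Vl ℓ) (Vl ℓ')) →
        (∀ ℓ, ∀ τ ∈ Vl ℓ,
          max (h (x ℓ)) ‖(fun i => (τ i : ℝ) / m) - (fun i => (x ℓ i : ℝ) / m)‖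
            ≤ h τ) →
        (m : ℝ) ^ (-(d : ℝ)) * ∑ τ ∈ V, h τ ^ (-(d : ℝ) * q / 2)
          ≤ C * ∑ ℓ, h (x ℓ) ^ ((d : ℝ) - d * q / 2) := by
  have hd0 : (0:ℝ) < d := by exact_mod_cast Nat.lt_of_lt_of_le Nat.zero_lt_one hd
  set r := q / 2 with hrdef
  have h1 : 1 ≤ (d:ℝ) * (r - 1) := by
    have e : (d:ℝ) * (r - 1) = (d:ℝ) * q / 2 - d := by rw [hrdef]; ring
    linarith [hqd, e.ge]
  have hr1 : 1 < r := by
    by_contra hc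
    push_neg at hc
    nlinarith [mul_nonneg hd0.le (by linarith : (0:ℝ) ≤ 1 - r)]
  have hrd : 2 / (r - 1) ≤ 2 * d := by
    rw [div_le_iff₀ (by linarith)]
    nlinarith [h1]
  have hCb : (0:ℝ) ≤ 5 + 2 / (r - 1) := by
    have : (0:ℝ) ≤ 2 / (r-1) := le_of_lt (div_pos two_pos (by linarith))
    linarith
  refine ⟨(5 + 2*(d:ℝ))^d, by positivity, ?_⟩
  intro m M V Vl x h hm hV1 hx hVU hdisj hcomp
  have hm0 : (0:ℝ) < m := by exact_mod_cast Nat.lt_of_lt_of_le Nat.zero_lt_one hm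
  have hmR : (1:ℝ) ≤ m := by exact_mod_cast hm
  have key : ∀ ℓ, ∑ τ ∈ Vl ℓ, h τ ^ (-(d:ℝ) * q / 2)
      ≤ ((5 + 2/(r-1)) * m) ^ d * h (x ℓ) ^ ((d:ℝ) - d * q / 2) := by
    intro ℓ
    set a := h (x ℓ) with hadef
    have haV : (1:ℝ)/m ≤ a := hV1 _ (hx ℓ)
    have ha0 : (0:ℝ) < a := lt_of_lt_of_le (by positivity) haV
    set g : Fin d → ℤ → ℝ :=
      fun i n => (max a (|((n - x ℓ i : ℤ) : ℝ)| / m)) ^ (-r) with hgdef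
    have hgnn : ∀ i n, 0 ≤ g i n := fun i n =>
      Real.rpow_nonneg (le_max_of_le_left ha0.le) _
    have hpt : ∀ τ ∈ Vl ℓ, h τ ^ (-(d:ℝ) * q / 2) ≤ ∏ i : Fin d, g i (τ i) := by
      intro τ hτ
      have hτV : τ ∈ V := by
        rw [hVU]
        exact Finset.mem_biUnion.mpr ⟨ℓ, Finset.mem_univ _, hτ⟩
      have hτ0 : (0:ℝ) < h τ := lt_of_lt_of_le (by positivity) (hV1 τ hτV)
      have hmax := hcomp ℓ τ hτ
      have hexp : (-(d:ℝ) * q / 2) = (-r) * (d:ℕ) := by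
        rw [hrdef]; push_cast; ring
      rw [hexp, Real.rpow_mul hτ0.le, Real.rpow_natCast]
      have hprod : (h τ ^ (-r)) ^ d = ∏ _i : Fin d, h τ ^ (-r) := by
        rw [Finset.prod_const, Finset.card_univ, Fintype.card_fin]
      rw [hprod]
      apply Finset.prod_le_prod (fun i _ => Real.rpow_nonneg hτ0.le _)
      intro i _
      rw [hgdef]
      apply Real.rpow_le_rpow_of_nonpos (lt_of_lt_of_le ha0 (le_max_left _ _)) _
        (by linarith)
      apply max_le (le_trans (le_max_left _ _) hmax)
      refine le_trans ?_ (le_trans (le_max_right _ _) hmax)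
      have hvi : ((fun i => (τ i : ℝ) / m) - (fun i => (x ℓ i : ℝ) / m)) i
          = ((τ i - x ℓ i : ℤ) : ℝ) / m := by
        simp only [Pi.sub_apply]
        push_cast
        ring
      have := norm_le_pi_norm ((fun i => (τ i : ℝ) / m) - (fun i => (x ℓ i : ℝ) / m)) i
      rw [hvi, Real.norm_eq_abs, abs_div, abs_of_pos hm0] at this
      exact this
    have hsum : ∑ τ ∈ Vl ℓ, ∏ i : Fin d, g i (τ i)
        ≤ ∏ i : Fin d, ∑ n ∈ (Vl ℓ).image (fun τ => τ i), g i n := by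
      rw [Finset.prod_univ_sum]
      apply Finset.sum_le_sum_of_subset_of_nonneg
      · intro τ hτ
        rw [Fintype.mem_piFinset]
        exact fun i => Finset.mem_image_of_mem _ hτ
      · intro p _ _
        exact Finset.prod_nonneg fun i _ => hgnn i (p i)
    have hi : ∀ i : Fin d, ∑ n ∈ (Vl ℓ).image (fun τ => τ i), g i n
        ≤ (5 + 2/(r-1)) * m * a ^ ((1:ℝ)-r) := by
      intro i
      have ho := oneD r a (m:ℝ) hr1 hmR haV
        ((((Vl ℓ).image (fun τ => τ i)).image (fun n => n - x ℓ i)))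
      rw [Finset.sum_image (by intro u _ v _ huv; simp only at huv; omega)] at ho
      exact ho
    calc ∑ τ ∈ Vl ℓ, h τ ^ (-(d:ℝ) * q / 2)
        ≤ ∑ τ ∈ Vl ℓ, ∏ i : Fin d, g i (τ i) := Finset.sum_le_sum hpt
      _ ≤ ∏ i : Fin d, ∑ n ∈ (Vl ℓ).image (fun τ => τ i), g i n := hsum
      _ ≤ ∏ _i : Fin d, ((5 + 2/(r-1)) * m * a ^ ((1:ℝ)-r)) := by
          apply Finset.prod_le_prod
          · exact fun i _ => Finset.sum_nonneg fun n _ => hgnn i n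
          · exact fun i _ => hi i
      _ = ((5 + 2/(r-1)) * m) ^ d * a ^ ((d:ℝ) - d * q / 2) := by
          rw [Finset.prod_const, Finset.card_univ, Fintype.card_fin, mul_pow]
          congr 1
          rw [← Real.rpow_natCast (a ^ ((1:ℝ)-r)) d, ← Real.rpow_mul ha0.le]
          congr 1
          rw [hrdef]
          push_cast
          ring
  rw [hVU, Finset.sum_biUnion (fun ℓ _ ℓ' _ hne => hdisj hne), Finset.mul_sum,
    Finset.mul_sum]
  apply Finset.sum_le_sum
  intro ℓ _
  have hmd : (m:ℝ) ^ (-(d:ℝ)) * (m:ℝ) ^ d = 1 := by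
    rw [← Real.rpow_natCast (m:ℝ) d, ← Real.rpow_add hm0]
    simp
  have hCle : ((5 + 2/(r-1)) : ℝ) ≤ 5 + 2*(d:ℝ) := by linarith [hrd]
  have hann : (0:ℝ) ≤ h (x ℓ) ^ ((d:ℝ) - d * q / 2) := Real.rpow_nonneg
    (le_trans (by positivity) (hV1 _ (hx ℓ))) _
  calc (m:ℝ) ^ (-(d:ℝ)) * ∑ τ ∈ Vl ℓ, h τ ^ (-(d:ℝ) * q / 2)
      ≤ (m:ℝ) ^ (-(d:ℝ)) * (((5 + 2/(r-1)) * m) ^ d * h (x ℓ) ^ ((d:ℝ) - d * q / 2)) :=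
        mul_le_mul_of_nonneg_left (key ℓ) (Real.rpow_nonneg hm0.le _)
    _ = (5 + 2/(r-1)) ^ d * ((m:ℝ) ^ (-(d:ℝ)) * (m:ℝ) ^ d)
          * h (x ℓ) ^ ((d:ℝ) - d * q / 2) := by rw [mul_pow]; ring
    _ = (5 + 2/(r-1)) ^ d * h (x ℓ) ^ ((d:ℝ) - d * q / 2) := by rw [hmd, mul_one]
    _ ≤ (5 + 2*(d:ℝ)) ^ d * h (x ℓ) ^ ((d:ℝ) - d * q / 2) := by
        exact mul_le_mul_of_nonneg_right (pow_le_pow_left₀ hCb hCle d) hann
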